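/- Let n ≥ 1, 1 ≤ h ≤ n, 0 ≤ a ≤ h−1 and 0 ≤ b ≤ n−h be integers and λ > 0 a real number. Then Σ_{i=0}^{b} C(n,i) C(n,b−i) λ^{−i} Σ_{i_1+i_2+i_3+i_4+i_5=a} C(2,i_1) C(h,i_2) C(h,i_3) C(n−i,i_4) C(n−(b−i),i_5) 2^{a−i_2} λ^{−i_4} = Σ_{u=0}^{a} (2/λ)^{a−u} C(h,u) C(2n+h+2−b, a−u) Σ_{i=0}^{b} C(n,i) C(n,b−i) λ^{−i} Σ_{s=0}^{a−u} [(u−a)_s (b−i−n−h−2)_s / ((b−2n−h−2)_s s!)] (1−λ)^s. (Equivalently: the coefficient A_{a,b}^{(n,h,λ,1/2)} = (−1)^a λ^{n−1} 2^b 2^{1−2n} times the left-hand side equals the same prefactor times the right-hand side, the inner s-sum being the terminating Gauss hypergeometric series ₂F₁(u−a, b−i−n−h−2; b−2n−h−2; 1−λ).) -/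

import Mathlib

open Finset Polynomial

/-- Rising factorial of a real number: `(x)_s = x (x+1) ⋯ (x+s−1)`, with `(x)_0 = 1`. -/
noncomputable def rfr (x : ℝ) (s : ℕ) : ℝ := ∏ i ∈ Finset.range s, (x + (i : ℝ))

lemma rfr_succ (x : ℝ) (s : ℕ) : rfr x (s+1) = rfr x s * (x + s) := Finset.prod_range_succ _ _

lemma rfr_neg_nat (k s : ℕ) : rfr (-(k:ℝ)) s = (-1)^s * (Nat.descFactorial k s : ℝ) := by
  induction s with
  | zero => simp [rfr]
  | succ s ih =>
    rw [rfr_succ, ih, Nat.descFactorial_succ]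
    rcases le_or_gt s k with hsk | hsk
    · push_cast [Nat.cast_sub hsk]
      ring
    · rw [Nat.descFactorial_eq_zero_iff_lt.2 hsk]
      have h0 : k - s = 0 := by omega
      rw [h0]
      push_cast
      ring

lemma vander_range (X Y p : ℕ) :
    ∑ r ∈ Finset.range (p+1), X.choose (p - r) * Y.choose r = (X+Y).choose p := by
  rw [Nat.add_choose_eq, Finset.Nat.sum_antidiagonal_eq_sum_range_succ_mk,
    ← Finset.sum_range_reflect]
  refine Finset.sum_congr rfl fun r hr => ?_
  simp only [Finset.mem_range] at hr
  have h1 : p + 1 - 1 - r = p - r := by omega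
  have h2 : p - (p - r) = r := by omega
  rw [h1, h2]

lemma choose_mul' (D j s : ℕ) (hsj : s ≤ j) :
    D.choose j * j.choose s = D.choose s * (D - s).choose (j - s) := by
  rcases le_or_gt j D with hjD | hjD
  · exact Nat.choose_mul hsj
  · rw [Nat.choose_eq_zero_of_lt hjD, Nat.zero_mul]
    rcases le_or_gt s D with hsD | hsD
    · rw [Nat.choose_eq_zero_of_lt (by omega : D - s < j - s), Nat.mul_zero]
    · rw [Nat.choose_eq_zero_of_lt hsD, Nat.zero_mul]

lemma innerSumNat (A D m s : ℕ) (hsm : s ≤ m) :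
    ∑ j ∈ Finset.range (m+1), A.choose (m-j) * (D.choose j * j.choose s)
      = D.choose s * (A + D - s).choose (m-s) := by
  have split : ∑ j ∈ Finset.range (m+1), A.choose (m-j) * (D.choose j * j.choose s)
      = ∑ j ∈ Finset.Ico s (m+1), A.choose (m-j) * (D.choose j * j.choose s) := by
    rw [Finset.range_eq_Ico,
      ← Finset.sum_Ico_consecutive _ (Nat.zero_le s) (by omega : s ≤ m + 1)]
    have hz : ∑ j ∈ Finset.Ico 0 s, A.choose (m-j) * (D.choose j * j.choose s) = 0 := by
      apply Finset.sum_eq_zero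
      intro j hj
      have hjs : j < s := (Finset.mem_Ico.mp hj).2
      rw [Nat.choose_eq_zero_of_lt hjs, Nat.mul_zero, Nat.mul_zero]
    rw [hz, Nat.zero_add]
  rw [split, Finset.sum_Ico_eq_sum_range]
  have congrstep : ∀ j ∈ Finset.range (m+1-s),
      A.choose (m-(s+j)) * (D.choose (s+j) * (s+j).choose s)
        = D.choose s * (A.choose (m-s-j) * (D-s).choose j) := by
    intro j _
    have h2 := choose_mul' D (s+j) s (Nat.le_add_right s j)
    have h3 : s + j - s = j := by omega
    rw [h2, h3]
    have h4 : m - (s+j) = m - s - j := by omega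
    rw [h4]
    ring
  rw [Finset.sum_congr rfl congrstep, ← Finset.mul_sum]
  have hrange : m + 1 - s = (m - s) + 1 := by omega
  rw [hrange]
  rcases le_or_gt s D with hsD | hsD
  · rw [show A + D - s = A + (D - s) from by omega, vander_range A (D-s) (m-s)]
  · rw [Nat.choose_eq_zero_of_lt hsD, Nat.zero_mul, Nat.zero_mul]

lemma starSum (A D m : ℕ) (x : ℝ) :
    ∑ j ∈ Finset.range (m+1), (A.choose (m-j) : ℝ) * (D.choose j : ℝ) * x^j
      = ∑ s ∈ Finset.range (m+1),
          (D.choose s : ℝ) * ((A+D-s).choose (m-s) : ℝ) * (x-1)^s := by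
  have expand : ∀ j, j ≤ m → x ^ j = ∑ s ∈ Finset.range (m+1), (j.choose s : ℝ) * (x-1)^s := by
    intro j hj
    have h1 : x ^ j = ((x-1)+1)^j := by norm_num
    rw [h1, add_pow]
    rw [Finset.sum_subset (Finset.range_subset_range.2 (by omega : j+1 ≤ m+1))]
    · exact Finset.sum_congr rfl fun s _ => by ring
    · intro s _ hs
      simp only [Finset.mem_range, not_lt] at hs
      rw [Nat.choose_eq_zero_of_lt (by omega : j < s)]
      simp
  have key : ∀ s, s ≤ m →
      ∑ j ∈ Finset.range (m+1), (A.choose (m-j) : ℝ) * (D.choose j : ℝ) * (j.choose s : ℝ)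
        = (D.choose s : ℝ) * ((A + D - s).choose (m-s) : ℝ) := by
    intro s hs
    have hc : ((∑ j ∈ Finset.range (m+1), A.choose (m-j) * (D.choose j * j.choose s) : ℕ) : ℝ)
        = ∑ j ∈ Finset.range (m+1), (A.choose (m-j):ℝ) * (D.choose j : ℝ) * (j.choose s : ℝ) := by
      push_cast
      exact Finset.sum_congr rfl fun _ _ => by ring
    rw [← hc, innerSumNat A D m s hs]
    push_cast
    ring
  calc ∑ j ∈ Finset.range (m+1), (A.choose (m-j) : ℝ) * (D.choose j : ℝ) * x^j
      = ∑ j ∈ Finset.range (m+1), ∑ s ∈ Finset.range (m+1),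
          (A.choose (m-j):ℝ) * (D.choose j:ℝ) * (j.choose s:ℝ) * (x-1)^s := by
        refine Finset.sum_congr rfl fun j hj => ?_
        rw [expand j (Nat.lt_succ_iff.mp (Finset.mem_range.mp hj)), Finset.mul_sum]
        exact Finset.sum_congr rfl fun s _ => by ring
    _ = ∑ s ∈ Finset.range (m+1), ∑ j ∈ Finset.range (m+1),
          (A.choose (m-j):ℝ) * (D.choose j:ℝ) * (j.choose s:ℝ) * (x-1)^s := Finset.sum_comm
    _ = ∑ s ∈ Finset.range (m+1),
          (D.choose s : ℝ) * ((A+D-s).choose (m-s) : ℝ) * (x-1)^s := by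
        refine Finset.sum_congr rfl fun s hs => ?_
        rw [← Finset.sum_mul, key s (by simpa [Nat.lt_succ_iff] using Finset.mem_range.mp hs)]

lemma coeff_ratio (N D m s : ℕ) (hsm : s ≤ m) (hmN : m ≤ N) :
    (N.choose m : ℝ) * ((Nat.descFactorial m s : ℝ) * (Nat.descFactorial D s : ℝ) /
      ((Nat.descFactorial N s : ℝ) * (s.factorial : ℝ)))
      = (D.choose s : ℝ) * ((N - s).choose (m - s) : ℝ) := by
  have hf : (s.factorial : ℝ) ≠ 0 := by exact_mod_cast s.factorial_ne_zero
  have hCNs : (N.choose s : ℝ) ≠ 0 := by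
    have := Nat.choose_pos (show s ≤ N by omega)
    positivity
  have h' : (N.choose m : ℝ) * (m.choose s:ℝ) = (N.choose s:ℝ) * ((N-s).choose (m-s):ℝ) := by
    exact_mod_cast Nat.choose_mul hsm
  simp only [Nat.descFactorial_eq_factorial_mul_choose, Nat.cast_mul]
  field_simp
  linear_combination (D.choose s : ℝ) * h'

lemma keyLemma (A D m : ℕ) (hm : m ≤ A + D) (lam : ℝ) (hlam : lam ≠ 0) :
    ∑ j ∈ Finset.range (m+1), (A.choose j : ℝ) * lam⁻¹ ^ j * (D.choose (m - j) : ℝ)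
      = lam⁻¹ ^ m * (((A + D).choose m : ℝ)) *
        ∑ s ∈ Finset.range (m+1),
          (rfr (-(m:ℝ)) s * rfr (-(D:ℝ)) s /
            (rfr (-((A+D : ℕ):ℝ)) s * (s.factorial : ℝ))) * (1 - lam) ^ s := by
  refine mul_left_cancel₀ (pow_ne_zero m hlam) ?_
  have hL : lam^m * (∑ j ∈ Finset.range (m+1),
        (A.choose j : ℝ) * lam⁻¹ ^ j * (D.choose (m-j) : ℝ))
      = ∑ j ∈ Finset.range (m+1), (A.choose (m-j) : ℝ) * (D.choose j : ℝ) * lam ^ j := by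
    rw [Finset.mul_sum, ← Finset.sum_range_reflect]
    refine Finset.sum_congr rfl fun j hj => ?_
    simp only [Finset.mem_range] at hj
    have h1 : m + 1 - 1 - j = m - j := by omega
    have h2 : m - (m - j) = j := by omega
    rw [h1, h2]
    have h3 : lam ^ m * lam⁻¹ ^ (m - j) = lam ^ j := by
      rw [inv_pow, ← div_eq_mul_inv, div_eq_iff (pow_ne_zero _ hlam), ← pow_add]
      congr 1
      omega
    calc lam^m * ((A.choose (m-j):ℝ) * lam⁻¹^(m-j) * (D.choose j:ℝ))
        = ((A.choose (m-j):ℝ) * (D.choose j:ℝ)) * (lam^m * lam⁻¹^(m-j)) := by ring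
      _ = _ := by rw [h3]
  have hR : lam^m * (lam⁻¹ ^ m * (((A + D).choose m : ℝ)) *
        ∑ s ∈ Finset.range (m+1),
          (rfr (-(m:ℝ)) s * rfr (-(D:ℝ)) s /
            (rfr (-((A+D : ℕ):ℝ)) s * (s.factorial : ℝ))) * (1 - lam) ^ s)
      = ∑ s ∈ Finset.range (m+1),
          (D.choose s : ℝ) * ((A+D-s).choose (m-s) : ℝ) * (lam-1)^s := by
    have hone : lam^m * lam⁻¹^m = 1 := by
      rw [inv_pow, mul_inv_cancel₀ (pow_ne_zero _ hlam)]
    calc lam^m * (lam⁻¹ ^ m * (((A + D).choose m : ℝ)) *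
          ∑ s ∈ Finset.range (m+1),
            (rfr (-(m:ℝ)) s * rfr (-(D:ℝ)) s /
              (rfr (-((A+D : ℕ):ℝ)) s * (s.factorial : ℝ))) * (1 - lam) ^ s)
        = (lam^m * lam⁻¹^m) * ((((A + D).choose m : ℝ)) *
          ∑ s ∈ Finset.range (m+1),
            (rfr (-(m:ℝ)) s * rfr (-(D:ℝ)) s /
              (rfr (-((A+D : ℕ):ℝ)) s * (s.factorial : ℝ))) * (1 - lam) ^ s) := by ring
      _ = ∑ s ∈ Finset.range (m+1), (((A + D).choose m : ℝ)) *
            ((rfr (-(m:ℝ)) s * rfr (-(D:ℝ)) s /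
              (rfr (-((A+D : ℕ):ℝ)) s * (s.factorial : ℝ))) * (1 - lam) ^ s) := by
          rw [hone, one_mul, Finset.mul_sum]
      _ = ∑ s ∈ Finset.range (m+1),
            (D.choose s : ℝ) * ((A+D-s).choose (m-s) : ℝ) * (lam-1)^s := by
          refine Finset.sum_congr rfl fun s hs => ?_
          have hsm : s ≤ m := Nat.lt_succ_iff.mp (Finset.mem_range.mp hs)
          rw [rfr_neg_nat, rfr_neg_nat, rfr_neg_nat]
          have hfac : (s.factorial : ℝ) ≠ 0 := by exact_mod_cast s.factorial_ne_zero
          have hdFN : (Nat.descFactorial (A+D) s : ℝ) ≠ 0 := by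
            rw [Nat.descFactorial_eq_factorial_mul_choose]
            have := Nat.choose_pos (show s ≤ A + D by omega)
            have := s.factorial_pos
            positivity
          have hneg : ((-1:ℝ))^s ≠ 0 := pow_ne_zero _ (by norm_num)
          have e : ((-1:ℝ)^s * (Nat.descFactorial m s : ℝ)) *
                ((-1:ℝ)^s * (Nat.descFactorial D s : ℝ)) /
                (((-1:ℝ)^s * (Nat.descFactorial (A+D) s : ℝ)) * (s.factorial : ℝ))
              = (-1:ℝ)^s * ((Nat.descFactorial m s : ℝ) * (Nat.descFactorial D s : ℝ) /
                ((Nat.descFactorial (A+D) s : ℝ) * (s.factorial : ℝ))) := by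
            field_simp
          rw [e]
          calc (((A + D).choose m : ℝ)) * ((-1:ℝ)^s *
                ((Nat.descFactorial m s : ℝ) * (Nat.descFactorial D s : ℝ) /
                  ((Nat.descFactorial (A+D) s : ℝ) * (s.factorial : ℝ))) * (1-lam)^s)
              = (((A + D).choose m : ℝ)) *
                ((Nat.descFactorial m s : ℝ) * (Nat.descFactorial D s : ℝ) /
                  ((Nat.descFactorial (A+D) s : ℝ) * (s.factorial : ℝ))) *
                ((-1:ℝ) * (1-lam))^s := by
                rw [mul_pow]
                ring
            _ = (D.choose s : ℝ) * (((A+D)-s).choose (m-s) : ℝ) * ((-1:ℝ) * (1-lam))^s := by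
                rw [coeff_ratio (A+D) D m s hsm hm]
            _ = (D.choose s : ℝ) * ((A+D-s).choose (m-s) : ℝ) * (lam-1)^s := by
                rw [show (-1:ℝ) * (1-lam) = lam - 1 from by ring]
  rw [hL, hR, starSum A D m lam]

lemma coeffP (c : ℝ) (N k : ℕ) :
    ((Polynomial.C c * Polynomial.X + 1) ^ N).coeff k = (N.choose k : ℝ) * c ^ k := by
  rw [add_pow, Polynomial.finset_sum_coeff]
  have hterm : ∀ i ∈ Finset.range (N+1),
      ((Polynomial.C c * Polynomial.X) ^ i * 1 ^ (N - i) *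
        ((N.choose i : ℕ) : Polynomial ℝ)).coeff k
        = if k = i then (N.choose i : ℝ) * c ^ i else 0 := by
    intro i _
    rw [one_pow, mul_one, mul_pow, ← Polynomial.C_pow, ← Polynomial.C_eq_natCast,
      Polynomial.coeff_mul_C, Polynomial.coeff_C_mul, Polynomial.coeff_X_pow]
    split_ifs with hki
    · ring
    · simp
  rw [Finset.sum_congr rfl hterm, Finset.sum_ite_eq]
  split_ifs with hk
  · rfl
  · simp only [Finset.mem_range, not_lt] at hk
    rw [Nat.choose_eq_zero_of_lt (by omega : N < k)]
    simp

lemma adt_succ_sum {M : Type*} [AddCommMonoid M] (k n : ℕ) (f : (Fin (k+1) → ℕ) → M) :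
    ∑ x ∈ Finset.Nat.antidiagonalTuple (k+1) n, f x
      = ∑ p ∈ Finset.HasAntidiagonal.antidiagonal n, ∑ x ∈ Finset.Nat.antidiagonalTuple k p.2,
          f (Fin.cons p.1 x) := by
  have h1 : ∑ x ∈ Finset.Nat.antidiagonalTuple (k+1) n, f x
      = ∑ q ∈ (Finset.HasAntidiagonal.antidiagonal n).sigma
          (fun p => Finset.Nat.antidiagonalTuple k p.2), f (Fin.cons q.1.1 q.2) := by
    refine Finset.sum_nbij' (fun x => ⟨(x 0, n - x 0), Fin.tail x⟩)
      (fun q => Fin.cons q.1.1 q.2) ?_ ?_ ?_ ?_ ?_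
    · intro x hx
      have hs := Finset.Nat.mem_antidiagonalTuple.mp hx
      have h0 : x 0 + ∑ i : Fin k, x i.succ = n := by
        rw [← Fin.sum_univ_succ]
        exact hs
      rw [Finset.mem_sigma]
      constructor
      · rw [Finset.HasAntidiagonal.mem_antidiagonal]
        dsimp only
        omega
      · rw [Finset.Nat.mem_antidiagonalTuple]
        show ∑ i : Fin k, x i.succ = n - x 0
        omega
    · rintro ⟨⟨p1, p2⟩, y⟩ hq
      rw [Finset.mem_sigma] at hq
      obtain ⟨hq1, hq2⟩ := hq
      rw [Finset.HasAntidiagonal.mem_antidiagonal] at hq1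
      simp only at hq1 hq2
      rw [Finset.Nat.mem_antidiagonalTuple] at hq2
      dsimp only
      rw [Finset.Nat.mem_antidiagonalTuple, Fin.sum_cons, hq2]
      exact hq1
    · intro x _
      dsimp only
      exact Fin.cons_self_tail x
    · rintro ⟨⟨p1, p2⟩, y⟩ hq
      rw [Finset.mem_sigma] at hq
      obtain ⟨hq1, hq2⟩ := hq
      rw [Finset.HasAntidiagonal.mem_antidiagonal] at hq1
      simp only at hq1
      dsimp only
      simp only [Fin.cons_zero, Fin.tail_cons]
      have hnp : n - p1 = p2 := by omega
      rw [hnp]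
    · intro x _
      dsimp only
      rw [Fin.cons_self_tail]
  rw [h1, Finset.sum_sigma]


lemma adt5_coeff (q1 q2 q3 q4 q5 : Polynomial ℝ) (a : ℕ) :
    ∑ x ∈ Finset.Nat.antidiagonalTuple 5 a,
      q1.coeff (x 0) * q2.coeff (x 1) * q3.coeff (x 2) * q4.coeff (x 3) * q5.coeff (x 4)
      = (q1 * (q2 * (q3 * (q4 * q5)))).coeff a := by
  calc ∑ x ∈ Finset.Nat.antidiagonalTuple 5 a,
      q1.coeff (x 0) * q2.coeff (x 1) * q3.coeff (x 2) * q4.coeff (x 3) * q5.coeff (x 4)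
      = ∑ p1 ∈ Finset.HasAntidiagonal.antidiagonal a, ∑ x ∈ Finset.Nat.antidiagonalTuple 4 p1.2,
          q1.coeff p1.1 * q2.coeff (x 0) * q3.coeff (x 1) * q4.coeff (x 2) *
            q5.coeff (x 3) := adt_succ_sum 4 a _
    _ = (q1 * (q2 * (q3 * (q4 * q5)))).coeff a := by
      rw [Polynomial.coeff_mul]
      refine Finset.sum_congr rfl fun p1 _ => ?_
      calc ∑ x ∈ Finset.Nat.antidiagonalTuple 4 p1.2,
          q1.coeff p1.1 * q2.coeff (x 0) * q3.coeff (x 1) * q4.coeff (x 2) * q5.coeff (x 3)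
          = ∑ p2 ∈ Finset.HasAntidiagonal.antidiagonal p1.2, ∑ x ∈ Finset.Nat.antidiagonalTuple 3 p2.2,
              q1.coeff p1.1 * q2.coeff p2.1 * q3.coeff (x 0) * q4.coeff (x 1) *
                q5.coeff (x 2) := adt_succ_sum 3 p1.2 _
        _ = q1.coeff p1.1 * (q2 * (q3 * (q4 * q5))).coeff p1.2 := by
          rw [Polynomial.coeff_mul, Finset.mul_sum]
          refine Finset.sum_congr rfl fun p2 _ => ?_
          calc ∑ x ∈ Finset.Nat.antidiagonalTuple 3 p2.2,
              q1.coeff p1.1 * q2.coeff p2.1 * q3.coeff (x 0) * q4.coeff (x 1) * q5.coeff (x 2)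
              = ∑ p3 ∈ Finset.HasAntidiagonal.antidiagonal p2.2, ∑ x ∈ Finset.Nat.antidiagonalTuple 2 p3.2,
                  q1.coeff p1.1 * q2.coeff p2.1 * q3.coeff p3.1 * q4.coeff (x 0) *
                    q5.coeff (x 1) := adt_succ_sum 2 p2.2 _
            _ = q1.coeff p1.1 * (q2.coeff p2.1 * (q3 * (q4 * q5)).coeff p2.2) := by
              rw [Polynomial.coeff_mul, Finset.mul_sum, Finset.mul_sum]
              refine Finset.sum_congr rfl fun p3 _ => ?_
              calc ∑ x ∈ Finset.Nat.antidiagonalTuple 2 p3.2,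
                  q1.coeff p1.1 * q2.coeff p2.1 * q3.coeff p3.1 * q4.coeff (x 0) *
                    q5.coeff (x 1)
                  = ∑ p4 ∈ Finset.HasAntidiagonal.antidiagonal p3.2,
                      ∑ x ∈ Finset.Nat.antidiagonalTuple 1 p4.2,
                      q1.coeff p1.1 * q2.coeff p2.1 * q3.coeff p3.1 * q4.coeff p4.1 *
                        q5.coeff (x 0) := adt_succ_sum 1 p3.2 _
                _ = q1.coeff p1.1 * (q2.coeff p2.1 * (q3.coeff p3.1 *
                      (q4 * q5).coeff p3.2)) := by
                  rw [Polynomial.coeff_mul, Finset.mul_sum, Finset.mul_sum, Finset.mul_sum]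
                  refine Finset.sum_congr rfl fun p4 _ => ?_
                  rw [Finset.Nat.antidiagonalTuple_one, Finset.sum_singleton]
                  show q1.coeff p1.1 * q2.coeff p2.1 * q3.coeff p3.1 * q4.coeff p4.1 *
                      q5.coeff p4.2
                    = q1.coeff p1.1 * (q2.coeff p2.1 * (q3.coeff p3.1 *
                        (q4.coeff p4.1 * q5.coeff p4.2)))
                  ring

lemma quint (hh A B' a : ℕ) (w z : ℝ) :
    ∑ x ∈ Finset.Nat.antidiagonalTuple 5 a,
      (Nat.choose 2 (x 0) : ℝ) * ((hh.choose (x 1) : ℝ) * z ^ (x 1)) * (hh.choose (x 2) : ℝ) *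
        ((A.choose (x 3) : ℝ) * w ^ (x 3)) * (B'.choose (x 4) : ℝ)
      = ∑ u ∈ Finset.range (a+1), (hh.choose u : ℝ) * z ^ u *
          ∑ j ∈ Finset.range (a - u + 1),
            (A.choose j : ℝ) * w ^ j * ((2 + hh + B').choose (a - u - j) : ℝ) := by
  have L : ∑ x ∈ Finset.Nat.antidiagonalTuple 5 a,
      (Nat.choose 2 (x 0) : ℝ) * ((hh.choose (x 1) : ℝ) * z ^ (x 1)) * (hh.choose (x 2) : ℝ) *
        ((A.choose (x 3) : ℝ) * w ^ (x 3)) * (B'.choose (x 4) : ℝ)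
      = ((Polynomial.C (1:ℝ) * Polynomial.X + 1)^2 *
          ((Polynomial.C z * Polynomial.X + 1)^hh *
            ((Polynomial.C (1:ℝ) * Polynomial.X + 1)^hh *
              ((Polynomial.C w * Polynomial.X + 1)^A *
                (Polynomial.C (1:ℝ) * Polynomial.X + 1)^B')))).coeff a := by
    rw [← adt5_coeff]
    refine Finset.sum_congr rfl fun x _ => ?_
    simp only [coeffP, one_pow, mul_one]
  rw [L, show ((Polynomial.C (1:ℝ) * Polynomial.X + 1)^2 *
          ((Polynomial.C z * Polynomial.X + 1)^hh *
            ((Polynomial.C (1:ℝ) * Polynomial.X + 1)^hh *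
              ((Polynomial.C w * Polynomial.X + 1)^A *
                (Polynomial.C (1:ℝ) * Polynomial.X + 1)^B'))))
      = (Polynomial.C z * Polynomial.X + 1)^hh *
          ((Polynomial.C w * Polynomial.X + 1)^A *
            (Polynomial.C (1:ℝ) * Polynomial.X + 1)^(2+hh+B')) from by
      rw [pow_add, pow_add]; ring]
  rw [Polynomial.coeff_mul, Finset.Nat.sum_antidiagonal_eq_sum_range_succ_mk]
  dsimp only
  refine Finset.sum_congr rfl fun u _ => ?_
  rw [Polynomial.coeff_mul, Finset.Nat.sum_antidiagonal_eq_sum_range_succ_mk, coeffP,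
    Finset.mul_sum]
  rw [Finset.mul_sum]
  refine Finset.sum_congr rfl fun j hj => ?_
  rw [coeffP, coeffP]
  simp only [one_pow, mul_one]

/-- Hypergeometric rewriting of `A_{a,b}^{(n,h,λ,1/2)}`: the quintuple-sum form equals the form
featuring the terminating Gauss series `₂F₁(u−a, b−i−n−h−2; b−2n−h−2; 1−λ)`. -/
theorem stmt_16 (n h a b : ℕ) (hn : 1 ≤ n) (hh1 : 1 ≤ h) (hhn : h ≤ n)
    (ha : a ≤ h - 1) (hb : b ≤ n - h) (lam : ℝ) (hlam : 0 < lam) :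
    ∑ i ∈ Finset.range (b + 1),
      (n.choose i : ℝ) * (n.choose (b - i) : ℝ) * lam ^ (-(i : ℤ)) *
        ∑ x ∈ Finset.Nat.antidiagonalTuple 5 a,
          (Nat.choose 2 (x 0) : ℝ) * (h.choose (x 1) : ℝ) * (h.choose (x 2) : ℝ) *
            ((n - i).choose (x 3) : ℝ) * ((n - (b - i)).choose (x 4) : ℝ) *
            2 ^ (a - x 1) * lam ^ (-(x 3 : ℤ))
    = ∑ u ∈ Finset.range (a + 1),
        (2 / lam) ^ (a - u) * (h.choose u : ℝ) * ((2 * n + h + 2 - b).choose (a - u) : ℝ) *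
          ∑ i ∈ Finset.range (b + 1),
            (n.choose i : ℝ) * (n.choose (b - i) : ℝ) * lam ^ (-(i : ℤ)) *
              ∑ s ∈ Finset.range (a - u + 1),
                (rfr ((u : ℝ) - (a : ℝ)) s *
                    rfr ((b : ℝ) - (i : ℝ) - (n : ℝ) - (h : ℝ) - 2) s /
                    (rfr ((b : ℝ) - 2 * (n : ℝ) - (h : ℝ) - 2) s * (s.factorial : ℝ))) *
                  (1 - lam) ^ s := by
  have main : ∀ i ∈ Finset.range (b + 1),
      (∑ x ∈ Finset.Nat.antidiagonalTuple 5 a,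
          (Nat.choose 2 (x 0) : ℝ) * (h.choose (x 1) : ℝ) * (h.choose (x 2) : ℝ) *
            ((n - i).choose (x 3) : ℝ) * ((n - (b - i)).choose (x 4) : ℝ) *
            2 ^ (a - x 1) * lam ^ (-(x 3 : ℤ)))
        = ∑ u ∈ Finset.range (a + 1),
            (2 / lam) ^ (a - u) * (h.choose u : ℝ) *
              ((2 * n + h + 2 - b).choose (a - u) : ℝ) *
              ∑ s ∈ Finset.range (a - u + 1),
                (rfr ((u : ℝ) - (a : ℝ)) s *
                    rfr ((b : ℝ) - (i : ℝ) - (n : ℝ) - (h : ℝ) - 2) s /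
                    (rfr ((b : ℝ) - 2 * (n : ℝ) - (h : ℝ) - 2) s * (s.factorial : ℝ))) *
                  (1 - lam) ^ s := by
    intro i hi
    simp only [Finset.mem_range] at hi
    have hib : i ≤ b := by omega
    have hbn : b ≤ n := by omega
    have hbin : b - i ≤ n := by omega
    calc ∑ x ∈ Finset.Nat.antidiagonalTuple 5 a,
          (Nat.choose 2 (x 0) : ℝ) * (h.choose (x 1) : ℝ) * (h.choose (x 2) : ℝ) *
            ((n - i).choose (x 3) : ℝ) * ((n - (b - i)).choose (x 4) : ℝ) *
            2 ^ (a - x 1) * lam ^ (-(x 3 : ℤ))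
        = ∑ x ∈ Finset.Nat.antidiagonalTuple 5 a, (2:ℝ)^a *
            ((Nat.choose 2 (x 0) : ℝ) * ((h.choose (x 1) : ℝ) * (2:ℝ)⁻¹ ^ (x 1)) *
              (h.choose (x 2) : ℝ) *
              (((n - i).choose (x 3) : ℝ) * lam⁻¹ ^ (x 3)) *
              ((n - (b - i)).choose (x 4) : ℝ)) := by
          refine Finset.sum_congr rfl fun x hx => ?_
          have hx1 : x 1 ≤ a := by
            have hs := Finset.Nat.mem_antidiagonalTuple.mp hx
            calc x 1 ≤ ∑ j, x j :=
                  Finset.single_le_sum (fun j _ => Nat.zero_le _) (Finset.mem_univ 1)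
              _ = a := hs
          have e2 : (2:ℝ) ^ (a - x 1) = 2^a * (2:ℝ)⁻¹ ^ (x 1) := by
            rw [inv_pow, ← div_eq_mul_inv, eq_div_iff (by positivity : (2:ℝ)^(x 1) ≠ 0),
              ← pow_add]
            congr 1
            omega
          have e3 : lam ^ (-(x 3 : ℤ)) = lam⁻¹ ^ (x 3) := by
            rw [zpow_neg, zpow_natCast, inv_pow]
          rw [e2, e3]
          ring
      _ = (2:ℝ)^a * ∑ x ∈ Finset.Nat.antidiagonalTuple 5 a,
            ((Nat.choose 2 (x 0) : ℝ) * ((h.choose (x 1) : ℝ) * (2:ℝ)⁻¹ ^ (x 1)) *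
              (h.choose (x 2) : ℝ) *
              (((n - i).choose (x 3) : ℝ) * lam⁻¹ ^ (x 3)) *
              ((n - (b - i)).choose (x 4) : ℝ)) := by
          rw [Finset.mul_sum]
      _ = (2:ℝ)^a * ∑ u ∈ Finset.range (a+1), (h.choose u : ℝ) * (2:ℝ)⁻¹ ^ u *
            ∑ j ∈ Finset.range (a - u + 1),
              ((n - i).choose j : ℝ) * lam⁻¹ ^ j *
                ((2 + h + (n - (b - i))).choose (a - u - j) : ℝ) := by
          rw [quint h (n - i) (n - (b - i)) a lam⁻¹ 2⁻¹]
      _ = ∑ u ∈ Finset.range (a + 1),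
            (2 / lam) ^ (a - u) * (h.choose u : ℝ) *
              ((2 * n + h + 2 - b).choose (a - u) : ℝ) *
              ∑ s ∈ Finset.range (a - u + 1),
                (rfr ((u : ℝ) - (a : ℝ)) s *
                    rfr ((b : ℝ) - (i : ℝ) - (n : ℝ) - (h : ℝ) - 2) s /
                    (rfr ((b : ℝ) - 2 * (n : ℝ) - (h : ℝ) - 2) s * (s.factorial : ℝ))) *
                  (1 - lam) ^ s := by
          rw [Finset.mul_sum]
          refine Finset.sum_congr rfl fun u hu => ?_
          have hua : u ≤ a := Nat.lt_succ_iff.mp (Finset.mem_range.mp hu)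
          rw [keyLemma (n - i) (2 + h + (n - (b - i))) (a - u)
            (by omega : a - u ≤ (n - i) + (2 + h + (n - (b - i)))) lam hlam.ne']
          have eA : (n - i) + (2 + h + (n - (b - i))) = 2*n + h + 2 - b := by omega
          simp only [eA]
          have e_m : -(((a - u : ℕ)) : ℝ) = (u : ℝ) - (a : ℝ) := by
            rw [Nat.cast_sub hua]
            ring
          have e_D : -(((2 + h + (n - (b - i)) : ℕ)) : ℝ)
              = (b : ℝ) - (i : ℝ) - (n : ℝ) - (h : ℝ) - 2 := by
            push_cast [Nat.cast_sub hbin, Nat.cast_sub hib]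
            ring
          have e_N : -(((2*n + h + 2 - b : ℕ)) : ℝ)
              = (b : ℝ) - 2 * (n : ℝ) - (h : ℝ) - 2 := by
            push_cast [Nat.cast_sub (show b ≤ 2*n + h + 2 by omega)]
            ring
          simp only [e_m, e_D, e_N]
          have hpow : (2:ℝ)^a * (2:ℝ)⁻¹ ^ u * lam⁻¹ ^ (a - u) = (2 / lam) ^ (a - u) := by
            rw [div_eq_mul_inv, mul_pow, inv_pow, inv_pow, ← div_eq_mul_inv,
              ← div_eq_mul_inv, eq_comm]
            congr 1
            rw [eq_div_iff (by positivity : (2:ℝ)^u ≠ 0), ← pow_add]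
            congr 1
            omega
          rw [← hpow]
          ring
  calc ∑ i ∈ Finset.range (b + 1),
        (n.choose i : ℝ) * (n.choose (b - i) : ℝ) * lam ^ (-(i : ℤ)) *
          ∑ x ∈ Finset.Nat.antidiagonalTuple 5 a,
            (Nat.choose 2 (x 0) : ℝ) * (h.choose (x 1) : ℝ) * (h.choose (x 2) : ℝ) *
              ((n - i).choose (x 3) : ℝ) * ((n - (b - i)).choose (x 4) : ℝ) *
              2 ^ (a - x 1) * lam ^ (-(x 3 : ℤ))
      = ∑ i ∈ Finset.range (b + 1), ∑ u ∈ Finset.range (a + 1),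
          (n.choose i : ℝ) * (n.choose (b - i) : ℝ) * lam ^ (-(i : ℤ)) *
            ((2 / lam) ^ (a - u) * (h.choose u : ℝ) *
              ((2 * n + h + 2 - b).choose (a - u) : ℝ) *
              ∑ s ∈ Finset.range (a - u + 1),
                (rfr ((u : ℝ) - (a : ℝ)) s *
                    rfr ((b : ℝ) - (i : ℝ) - (n : ℝ) - (h : ℝ) - 2) s /
                    (rfr ((b : ℝ) - 2 * (n : ℝ) - (h : ℝ) - 2) s * (s.factorial : ℝ))) *
                  (1 - lam) ^ s) := by
        refine Finset.sum_congr rfl fun i hi => ?_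
        rw [main i hi, Finset.mul_sum]
    _ = ∑ u ∈ Finset.range (a + 1), ∑ i ∈ Finset.range (b + 1),
          (n.choose i : ℝ) * (n.choose (b - i) : ℝ) * lam ^ (-(i : ℤ)) *
            ((2 / lam) ^ (a - u) * (h.choose u : ℝ) *
              ((2 * n + h + 2 - b).choose (a - u) : ℝ) *
              ∑ s ∈ Finset.range (a - u + 1),
                (rfr ((u : ℝ) - (a : ℝ)) s *
                    rfr ((b : ℝ) - (i : ℝ) - (n : ℝ) - (h : ℝ) - 2) s /
                    (rfr ((b : ℝ) - 2 * (n : ℝ) - (h : ℝ) - 2) s * (s.factorial : ℝ))) *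
                  (1 - lam) ^ s) := Finset.sum_comm
    _ = ∑ u ∈ Finset.range (a + 1),
        (2 / lam) ^ (a - u) * (h.choose u : ℝ) * ((2 * n + h + 2 - b).choose (a - u) : ℝ) *
          ∑ i ∈ Finset.range (b + 1),
            (n.choose i : ℝ) * (n.choose (b - i) : ℝ) * lam ^ (-(i : ℤ)) *
              ∑ s ∈ Finset.range (a - u + 1),
                (rfr ((u : ℝ) - (a : ℝ)) s *
                    rfr ((b : ℝ) - (i : ℝ) - (n : ℝ) - (h : ℝ) - 2) s /
                    (rfr ((b : ℝ) - 2 * (n : ℝ) - (h : ℝ) - 2) s * (s.factorial : ℝ))) *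
                  (1 - lam) ^ s := by
        refine Finset.sum_congr rfl fun u _ => ?_
        rw [Finset.mul_sum]
        refine Finset.sum_congr rfl fun i _ => ?_
        ring
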